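/- If μ ∈ [0,1] and ρ ∈ (0, ∞), then Φ(μ, ρ) ≥ log(min(ρ/(μ+ρ), 1/e)). -/

import Mathlib

open Real Set

/-- The function `Φ : [0,1] × (0,∞) → ℝ` from the paper, extended by the given
formulas to all of `ℝ × ℝ`. -/
noncomputable def Phi (μ ρ : ℝ) : ℝ :=
  if μ = 0 then -1 / (1 + ρ) else (1 / μ) * Real.log (1 - μ / (1 + ρ))

namespace PhiAux


/-- `f x = e^x (1 - (e-2) x) - 1`, the derivative of `F`. -/
noncomputable def f (x : ℝ) : ℝ := Real.exp x * (1 - (Real.exp 1 - 2) * x) - 1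

/-- `F x = e^x (e - 1 - (e-2) x) - (e-1) - x`. -/
noncomputable def F (x : ℝ) : ℝ :=
  Real.exp x * (Real.exp 1 - 1 - (Real.exp 1 - 2) * x) - (Real.exp 1 - 1) - x

lemma e_gt : (2.7182818283:ℝ) < Real.exp 1 := Real.exp_one_gt_d9
lemma e_lt : Real.exp 1 < 2.7182818286 := Real.exp_one_lt_d9

lemma hasDerivAt_f (x : ℝ) :
    HasDerivAt f (Real.exp x * (3 - Real.exp 1 - (Real.exp 1 - 2) * x)) x := by
  have h1 : HasDerivAt (fun y : ℝ => 1 - (Real.exp 1 - 2) * y) (-(Real.exp 1 - 2)) x := by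
    simpa using ((hasDerivAt_id x).const_mul (Real.exp 1 - 2)).const_sub 1
  have h2 := ((Real.hasDerivAt_exp x).mul h1).sub_const 1
  refine h2.congr_deriv ?_
  ring

lemma hasDerivAt_F (x : ℝ) : HasDerivAt F (f x) x := by
  have h1 : HasDerivAt (fun y : ℝ => Real.exp 1 - 1 - (Real.exp 1 - 2) * y)
      (-(Real.exp 1 - 2)) x := by
    simpa using ((hasDerivAt_id x).const_mul (Real.exp 1 - 2)).const_sub (Real.exp 1 - 1)
  have h2 := (((Real.hasDerivAt_exp x).mul h1).sub_const (Real.exp 1 - 1)).sub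
    (hasDerivAt_id x)
  refine h2.congr_deriv ?_
  unfold f
  ring

lemma deriv_f_eq : deriv f = fun x => Real.exp x * (3 - Real.exp 1 - (Real.exp 1 - 2) * x) := by
  funext x; exact (hasDerivAt_f x).deriv

lemma hasDerivAt_f' (x : ℝ) :
    HasDerivAt (fun y => Real.exp y * (3 - Real.exp 1 - (Real.exp 1 - 2) * y))
      (Real.exp x * (5 - 2 * Real.exp 1 - (Real.exp 1 - 2) * x)) x := by
  have h1 : HasDerivAt (fun y : ℝ => 3 - Real.exp 1 - (Real.exp 1 - 2) * y)
      (-(Real.exp 1 - 2)) x := by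
    simpa using ((hasDerivAt_id x).const_mul (Real.exp 1 - 2)).const_sub (3 - Real.exp 1)
  have h2 := (Real.hasDerivAt_exp x).mul h1
  refine h2.congr_deriv ?_
  ring

lemma f_concave : ConcaveOn ℝ (Icc (0:ℝ) 1) f := by
  apply concaveOn_of_deriv2_nonpos' (convex_Icc 0 1)
  · intro x _
    exact (hasDerivAt_f x).differentiableAt.differentiableWithinAt
  · intro x _
    rw [deriv_f_eq]
    exact (hasDerivAt_f' x).differentiableAt.differentiableWithinAt
  · intro x hx
    have h2 : deriv^[2] f x = Real.exp x * (5 - 2 * Real.exp 1 - (Real.exp 1 - 2) * x) := by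
      have : deriv^[2] f x = deriv (deriv f) x := rfl
      rw [this, deriv_f_eq, (hasDerivAt_f' x).deriv]
    rw [h2]
    have hx0 : (0:ℝ) ≤ x := hx.1
    have he := e_gt
    have hep := Real.exp_pos x
    nlinarith [mul_nonneg (sub_nonneg.2 (by nlinarith : (2:ℝ) ≤ Real.exp 1)) hx0]

lemma f_zero : f 0 = 0 := by simp [f]

lemma F_zero : F 0 = 0 := by simp [F]

lemma F_one : F 1 = 0 := by
  unfold F
  ring

end PhiAux

namespace PhiAux
open PhiAux

lemma F_cont : Continuous F := by
  have : Differentiable ℝ F := fun x => (hasDerivAt_F x).differentiableAt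
  exact this.continuous

lemma deriv_F_eq : deriv F = f := funext fun x => (hasDerivAt_F x).deriv

lemma F_nonneg {t : ℝ} (ht : t ∈ Icc (0:ℝ) 1) : 0 ≤ F t := by
  obtain ⟨ht0, ht1⟩ := ht
  rcases eq_or_lt_of_le ht0 with h | htpos
  · rw [← h, F_zero]
  by_cases hft : 0 ≤ f t
  · -- f ≥ 0 on [0, t] by concavity, so F monotone on [0, t]
    have hmono : MonotoneOn F (Icc 0 t) := by
      apply monotoneOn_of_deriv_nonneg (convex_Icc 0 t) F_cont.continuousOn
      · intro x _; exact (hasDerivAt_F x).differentiableAt.differentiableWithinAt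
      · intro x hx
        rw [interior_Icc] at hx
        rw [deriv_F_eq]
        have hx0 : 0 < x := hx.1
        have hxt : x < t := hx.2
        -- concavity: f x ≥ (1 - x/t) f 0 + (x/t) f t
        have ha : (0:ℝ) ≤ 1 - x / t := by
          rw [sub_nonneg, div_le_one htpos]; exact le_of_lt hxt
        have hb : (0:ℝ) ≤ x / t := le_of_lt (div_pos hx0 htpos)
        have hab : (1 - x / t) + x / t = 1 := by ring
        have h0m : (0:ℝ) ∈ Icc (0:ℝ) 1 := by constructor <;> norm_num
        have htm : t ∈ Icc (0:ℝ) 1 := ⟨ht0, ht1⟩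
        have hc := f_concave.2 h0m htm ha hb hab
        have hxe : (1 - x / t) • (0:ℝ) + (x / t) • t = x := by
          simp only [smul_eq_mul]
          field_simp
          ring
        rw [hxe] at hc
        have : (1 - x / t) • f 0 + (x / t) • f t = (x / t) * f t := by
          rw [f_zero]; simp [smul_eq_mul]
        rw [this] at hc
        exact le_trans (mul_nonneg hb hft) hc
    have := hmono ⟨le_refl 0, ht0⟩ ⟨ht0, le_refl t⟩ ht0
    rwa [F_zero] at this
  · -- f t < 0 : f ≤ 0 on [t, 1] by concavity, so F antitone on [t,1]
    push_neg at hft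
    have hanti : AntitoneOn F (Icc t 1) := by
      apply antitoneOn_of_deriv_nonpos (convex_Icc t 1) F_cont.continuousOn
      · intro x _; exact (hasDerivAt_F x).differentiableAt.differentiableWithinAt
      · intro x hx
        rw [interior_Icc] at hx
        rw [deriv_F_eq]
        have hxt : t < x := hx.1
        have hx1 : x < 1 := hx.2
        have hxpos : 0 < x := lt_trans htpos hxt
        -- concavity at t = (1 - t/x)*0 + (t/x)*x : f t ≥ (t/x) f x
        have ha : (0:ℝ) ≤ 1 - t / x := by
          rw [sub_nonneg, div_le_one hxpos]; exact le_of_lt hxt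
        have hb : (0:ℝ) ≤ t / x := le_of_lt (div_pos htpos hxpos)
        have hab : (1 - t / x) + t / x = 1 := by ring
        have h0m : (0:ℝ) ∈ Icc (0:ℝ) 1 := by constructor <;> norm_num
        have hxm : x ∈ Icc (0:ℝ) 1 := ⟨le_of_lt hxpos, le_of_lt hx1⟩
        have hc := f_concave.2 h0m hxm ha hb hab
        have hte : (1 - t / x) • (0:ℝ) + (t / x) • x = t := by
          simp only [smul_eq_mul]
          field_simp
          ring
        rw [hte] at hc
        have : (1 - t / x) • f 0 + (t / x) • f x = (t / x) * f x := by
          rw [f_zero]; simp [smul_eq_mul]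
        rw [this] at hc
        -- (t/x) * f x ≤ f t < 0, t/x > 0 ⇒ f x < 0
        by_contra hcon
        push_neg at hcon
        have : 0 < (t / x) * f x → False := fun h => absurd (lt_of_le_of_lt (le_trans (le_of_lt h) hc) hft) (lt_irrefl 0)
        nlinarith [div_pos htpos hxpos]
    have := hanti ⟨le_refl t, ht1⟩ ⟨ht1, le_refl 1⟩ ht1
    rwa [F_one] at this

/-- Core inequality A: if `μ ≤ (e-1)ρ` then `e^{-μ}(1+ρ) ≤ 1+ρ-μ`. -/
lemma coreA {μ ρ : ℝ} (hμ0 : 0 ≤ μ) (hμ1 : μ ≤ 1) (hρ : 0 < ρ)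
    (h : μ ≤ (Real.exp 1 - 1) * ρ) :
    Real.exp (-μ) * (1 + ρ) ≤ 1 + ρ - μ := by
  have hF := F_nonneg ⟨hμ0, hμ1⟩
  unfold F at hF
  have he := e_gt
  have hd : 0 < Real.exp 1 - 1 - (Real.exp 1 - 2) * μ := by nlinarith
  have hexpμ : 0 < Real.exp μ := Real.exp_pos μ
  -- From hF : exp μ * (e-1-(e-2)μ) ≥ e-1+μ
  have key : 1 + ρ ≤ (1 + ρ - μ) * Real.exp μ := by
    have h1 : (1 + ρ) * (Real.exp 1 - 1 - (Real.exp 1 - 2) * μ)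
        ≤ (1 + ρ - μ) * (Real.exp 1 - 1 + μ) := by nlinarith
    have h2 : (1 + ρ - μ) * (Real.exp 1 - 1 + μ)
        ≤ (1 + ρ - μ) * (Real.exp μ * (Real.exp 1 - 1 - (Real.exp 1 - 2) * μ)) := by
      have hpos : (0:ℝ) ≤ 1 + ρ - μ := by nlinarith
      have : Real.exp 1 - 1 + μ ≤ Real.exp μ * (Real.exp 1 - 1 - (Real.exp 1 - 2) * μ) := by
        nlinarith
      exact mul_le_mul_of_nonneg_left this hpos
    have h3 := le_trans h1 h2
    refine le_of_mul_le_mul_right ?_ hd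
    linear_combination h3
  rw [Real.exp_neg]
  rw [inv_mul_le_iff₀ hexpμ]
  linarith [key]

end PhiAux

namespace PhiAux

/-- Log form of case A: if `μ ≤ (e-1)ρ` then `log(1 - μ/(1+ρ)) ≥ -μ`. -/
lemma logA {μ ρ : ℝ} (hμ0 : 0 ≤ μ) (hμ1 : μ ≤ 1) (hρ : 0 < ρ)
    (h : μ ≤ (Real.exp 1 - 1) * ρ) :
    -μ ≤ Real.log (1 - μ / (1 + ρ)) := by
  have h1ρ : (0:ℝ) < 1 + ρ := by linarith
  have hcore := coreA hμ0 hμ1 hρ h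
  have hval : 1 - μ / (1 + ρ) = (1 + ρ - μ) / (1 + ρ) := by field_simp
  have hexp : Real.exp (-μ) ≤ 1 - μ / (1 + ρ) := by
    rw [hval, le_div_iff₀ h1ρ]
    linarith [hcore]
  calc -μ = Real.log (Real.exp (-μ)) := (Real.log_exp _).symm
    _ ≤ Real.log (1 - μ / (1 + ρ)) := Real.log_le_log (Real.exp_pos _) hexp

/-- The auxiliary function for case B, as a function of `ρ`. -/
noncomputable def G (μ : ℝ) (r : ℝ) : ℝ :=
  Real.log (1 + r - μ) - Real.log (1 + r) - μ * Real.log r + μ * Real.log (μ + r)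

lemma hasDerivAt_G {μ r : ℝ} (hμ0 : 0 < μ) (hμ1 : μ ≤ 1) (hr : 0 < r) :
    HasDerivAt (G μ) (1 / (1 + r - μ) - 1 / (1 + r) - μ / r + μ / (μ + r)) r := by
  have h1 : (0:ℝ) < 1 + r - μ := by linarith
  have h2 : (0:ℝ) < 1 + r := by linarith
  have h3 : (0:ℝ) < μ + r := by linarith
  have d1 : HasDerivAt (fun y : ℝ => Real.log (1 + y - μ)) (1 / (1 + r - μ)) r := by
    have : HasDerivAt (fun y : ℝ => 1 + y - μ) 1 r := by
      simpa using ((hasDerivAt_id r).const_add 1).sub_const μ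
    simpa using this.log (ne_of_gt h1)
  have d2 : HasDerivAt (fun y : ℝ => Real.log (1 + y)) (1 / (1 + r)) r := by
    have : HasDerivAt (fun y : ℝ => 1 + y) 1 r := (hasDerivAt_id r).const_add 1
    simpa using this.log (ne_of_gt h2)
  have d3 : HasDerivAt (fun y : ℝ => μ * Real.log y) (μ * (1 / r)) r := by
    simpa using (Real.hasDerivAt_log (ne_of_gt hr)).const_mul μ
  have d4 : HasDerivAt (fun y : ℝ => μ * Real.log (μ + y)) (μ * (1 / (μ + r))) r := by
    have : HasDerivAt (fun y : ℝ => μ + y) 1 r := (hasDerivAt_id r).const_add μ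
    have := this.log (ne_of_gt h3)
    simpa using this.const_mul μ
  have := ((d1.sub d2).sub d3).add d4
  refine this.congr_deriv ?_
  ring

/-- Case B: if `(e-1)ρ ≤ μ` then `Phi μ ρ ≥ log (ρ/(μ+ρ))`, in log form. -/
lemma caseB_log {μ ρ : ℝ} (hμ0 : 0 < μ) (hμ1 : μ ≤ 1) (hρ : 0 < ρ)
    (h : (Real.exp 1 - 1) * ρ ≤ μ) :
    μ * (Real.log ρ - Real.log (μ + ρ)) ≤ Real.log (1 + ρ - μ) - Real.log (1 + ρ) := by
  have he := e_gt
  have hem : (0:ℝ) < Real.exp 1 - 1 := by nlinarith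
  set ρ₀ : ℝ := μ / (Real.exp 1 - 1) with hρ₀def
  have hρ₀pos : 0 < ρ₀ := div_pos hμ0 hem
  have hρρ₀ : ρ ≤ ρ₀ := by
    rw [hρ₀def, le_div_iff₀ hem]; linarith
  have hρ₀1 : ρ₀ < 1 := by
    rw [hρ₀def, div_lt_one hem]; nlinarith
  -- G is antitone on [ρ, ρ₀]
  have hanti : AntitoneOn (G μ) (Icc ρ ρ₀) := by
    apply antitoneOn_of_deriv_nonpos (convex_Icc ρ ρ₀)
    · intro x hx
      have hxpos : 0 < x := lt_of_lt_of_le hρ hx.1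
      exact ((hasDerivAt_G hμ0 hμ1 hxpos).continuousAt).continuousWithinAt
    · intro x hx
      rw [interior_Icc] at hx
      have hxpos : 0 < x := lt_trans hρ hx.1
      exact (hasDerivAt_G hμ0 hμ1 hxpos).differentiableAt.differentiableWithinAt
    · intro x hx
      rw [interior_Icc] at hx
      have hxpos : 0 < x := lt_trans hρ hx.1
      have hxρ₀ : x < ρ₀ := hx.2
      rw [(hasDerivAt_G hμ0 hμ1 hxpos).deriv]
      have h1 : (0:ℝ) < 1 + x - μ := by linarith
      have h2 : (0:ℝ) < 1 + x := by linarith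
      have h3 : (0:ℝ) < μ + x := by linarith
      have hxμ : x < μ := lt_of_lt_of_le hxρ₀ (by rw [hρ₀def, div_le_iff₀ hem]; nlinarith)
      have key : x * (μ + x) ≤ μ * (1 + x - μ) * (1 + x) := by
        nlinarith [mul_nonneg (sub_nonneg.2 hμ1) (sub_nonneg.2 (le_of_lt hxμ)), sq_nonneg x]
      have heq : 1 / (1 + x - μ) - 1 / (1 + x) - μ / x + μ / (μ + x)
          = (μ * (x * (μ + x) - μ * ((1 + x - μ) * (1 + x)))) / ((1 + x - μ) * (1 + x) * (x * (μ + x))) := by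
        field_simp
        ring
      rw [heq]
      apply div_nonpos_of_nonpos_of_nonneg
      · nlinarith [mul_le_mul_of_nonneg_left key (le_of_lt hμ0)]
      · positivity
  -- G μ ρ₀ ≥ 0, from logA at the boundary
  have hG0 : 0 ≤ G μ ρ₀ := by
    have hμeq : μ = (Real.exp 1 - 1) * ρ₀ := by
      rw [hρ₀def]; field_simp
    have hA := logA (le_of_lt hμ0) hμ1 hρ₀pos (le_of_eq hμeq)
    have h2 : (0:ℝ) < 1 + ρ₀ := by linarith
    have h1 : (0:ℝ) < 1 + ρ₀ - μ := by linarith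
    have hlog1 : Real.log (1 - μ / (1 + ρ₀)) = Real.log (1 + ρ₀ - μ) - Real.log (1 + ρ₀) := by
      rw [show 1 - μ / (1 + ρ₀) = (1 + ρ₀ - μ) / (1 + ρ₀) by field_simp,
        Real.log_div (ne_of_gt h1) (ne_of_gt h2)]
    have hsum : μ + ρ₀ = Real.exp 1 * ρ₀ := by
      rw [hμeq]; ring
    have hlog2 : Real.log (μ + ρ₀) = 1 + Real.log ρ₀ := by
      rw [hsum, Real.log_mul (Real.exp_ne_zero 1) (ne_of_gt hρ₀pos), Real.log_exp]
    unfold G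
    rw [hlog2]
    rw [hlog1] at hA
    nlinarith [hA]
  have hGρ : 0 ≤ G μ ρ := le_trans hG0 (hanti ⟨le_refl ρ, hρρ₀⟩ ⟨hρρ₀, le_refl ρ₀⟩ hρρ₀)
  unfold G at hGρ
  nlinarith [hGρ]

end PhiAux


theorem Phi_lower_bound (μ ρ : ℝ) (hμ : μ ∈ Set.Icc (0:ℝ) 1) (hρ : ρ ∈ Set.Ioi (0:ℝ)) :
    Phi μ ρ ≥ Real.log (min (ρ / (μ + ρ)) (1 / Real.exp 1)) := by
  obtain ⟨hμ0, hμ1⟩ := hμ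
  have hρ0 : (0:ℝ) < ρ := hρ
  have hμρ : (0:ℝ) < μ + ρ := by linarith
  have hfrac_pos : (0:ℝ) < ρ / (μ + ρ) := div_pos hρ0 hμρ
  have hinv_pos : (0:ℝ) < 1 / Real.exp 1 := by positivity
  have hmin_pos : (0:ℝ) < min (ρ / (μ + ρ)) (1 / Real.exp 1) := lt_min hfrac_pos hinv_pos
  have hlog_inv : Real.log (1 / Real.exp 1) = -1 := by
    rw [one_div, Real.log_inv, Real.log_exp]
  -- log min ≤ -1
  have hminle1 : Real.log (min (ρ / (μ + ρ)) (1 / Real.exp 1)) ≤ -1 := by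
    rw [← hlog_inv]
    exact Real.log_le_log hmin_pos (min_le_right _ _)
  have hminlefrac : Real.log (min (ρ / (μ + ρ)) (1 / Real.exp 1)) ≤ Real.log (ρ / (μ + ρ)) :=
    Real.log_le_log hmin_pos (min_le_left _ _)
  rcases eq_or_lt_of_le hμ0 with hμz | hμpos
  · -- μ = 0
    rw [Phi, if_pos hμz.symm]
    have : -1 / (1 + ρ) ≥ -1 := by
      rw [ge_iff_le, neg_div, neg_le_neg_iff, div_le_one (by linarith : (0:ℝ) < 1 + ρ)]
      linarith
    linarith [hminle1]
  · rw [Phi, if_neg (ne_of_gt hμpos)]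
    by_cases hcase : μ ≤ (Real.exp 1 - 1) * ρ
    · -- case A : Phi ≥ -1
      have hA := PhiAux.logA hμ0 hμ1 hρ0 hcase
      have : (1 / μ) * Real.log (1 - μ / (1 + ρ)) ≥ (1 / μ) * (-μ) := by
        apply mul_le_mul_of_nonneg_left hA (by positivity)
      have heq : (1 / μ) * (-μ) = -1 := by field_simp
      rw [heq] at this
      linarith [hminle1]
    · -- case B : Phi ≥ log (ρ/(μ+ρ))
      push_neg at hcase
      have hB := PhiAux.caseB_log hμpos hμ1 hρ0 (le_of_lt hcase)
      have h2 : (0:ℝ) < 1 + ρ := by linarith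
      have h1 : (0:ℝ) < 1 + ρ - μ := by linarith
      have hlog1 : Real.log (1 - μ / (1 + ρ)) = Real.log (1 + ρ - μ) - Real.log (1 + ρ) := by
        rw [show 1 - μ / (1 + ρ) = (1 + ρ - μ) / (1 + ρ) by field_simp,
          Real.log_div (ne_of_gt h1) (ne_of_gt h2)]
      have hlogfrac : Real.log (ρ / (μ + ρ)) = Real.log ρ - Real.log (μ + ρ) :=
        Real.log_div (ne_of_gt hρ0) (ne_of_gt hμρ)
      have hgoal : Real.log (ρ / (μ + ρ)) ≤ (1 / μ) * Real.log (1 - μ / (1 + ρ)) := by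
        rw [hlog1, hlogfrac]
        rw [mul_comm, ← div_eq_mul_one_div, le_div_iff₀ hμpos]
        linarith [hB]
      linarith [hminlefrac, hgoal]
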